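/- arXiv:1312.6532 — 5 statements merged into one kernel-verified Lean document; each statement's English description precedes it below -/
import Mathlib

section
/- Weak secrecy of shared HMAC keys: for all terms a, b, k and logs L, if L is Good, KeyAB a b k L holds, and Level Low k L holds, then Logged (Bad a) L or Logged (Bad b) L. -/
abbrev byte := Nat

inductive term : Type
  | Literal (bs : List byte)
  | Pair (t1 t2 : term)
  | Hmac (k m : term)
  | SEnc (k p : term)

open term

inductive nonceUsage : Type

inductive hmacKeyUsage : Type
  | U_KeyAB (a b : term)

inductive sencKeyUsage : Type

inductive usage : Type
  | AttackerGuess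
  | Nonce (nu : nonceUsage)
  | HmacKey (hu : hmacKeyUsage)
  | SEncKey (su : sencKeyUsage)

inductive event : Type
  | New (t : term) (u : usage)
  | Request (a b req : term)
  | Response (a b req resp : term)
  | Bad (p : term)

abbrev log := Set event

def Logged (e : event) (L : log) : Prop := e ∈ L

def tagRequest : term := Literal [49]
def tagResponse : term := Literal [50]

def Requested (m req : term) : Prop := m = Pair tagRequest req
def Responded (m req resp : term) : Prop := m = Pair tagResponse (Pair req resp)

def KeyAB (a b k : term) (L : log) : Prop :=
  Logged (event.New k (usage.HmacKey (hmacKeyUsage.U_KeyAB a b))) L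

def KeyABPayload (a b m : term) (L : log) : Prop :=
  (∃ req, Requested m req ∧ Logged (event.Request a b req) L) ∨
  (∃ req resp, Responded m req resp ∧ Logged (event.Response a b req resp) L)

def canHmac (k m : term) (L : log) : Prop :=
  ∃ a b, KeyAB a b k L ∧ KeyABPayload a b m L

def KeyABComp (a b : term) (L : log) : Prop :=
  Logged (event.Bad a) L ∨ Logged (event.Bad b) L

def hmacComp (k : term) (L : log) : Prop :=
  ∃ a b, KeyAB a b k L ∧ KeyABComp a b L

def nonceComp (_t : term) (_L : log) : Prop := False
def sencComp (_t : term) (_L : log) : Prop := False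
def canSEnc (_k _p : term) (_L : log) : Prop := False

inductive level : Type | Low | High

inductive Level : level → term → log → Prop
  | Level_AttackerGuess {l : level} {bs : List byte} {L : log} :
      Logged (event.New (Literal bs) usage.AttackerGuess) L →
      Level l (Literal bs) L
  | Level_Nonce {l : level} {bs : List byte} {L : log} (nu : nonceUsage) :
      Logged (event.New (Literal bs) (usage.Nonce nu)) L →
      (l = level.Low → nonceComp (Literal bs) L) →
      Level l (Literal bs) L
  | Level_HMacKey {l : level} {bs : List byte} {L : log} (hu : hmacKeyUsage) :
      Logged (event.New (Literal bs) (usage.HmacKey hu)) L →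
      (l = level.Low → hmacComp (Literal bs) L) →
      Level l (Literal bs) L
  | Level_SEncKey {l : level} {bs : List byte} {L : log} (su : sencKeyUsage) :
      Logged (event.New (Literal bs) (usage.SEncKey su)) L →
      (l = level.Low → sencComp (Literal bs) L) →
      Level l (Literal bs) L
  | Level_Pair {l : level} {t1 t2 : term} {L : log} :
      Level l t1 L → Level l t2 L → Level l (Pair t1 t2) L
  | Level_Hmac {l : level} {k m : term} {L : log} :
      canHmac k m L → Level l m L → Level l (Hmac k m) L
  | Level_Hmac_Low {l : level} {k m : term} {L : log} :
      Level level.Low k L → Level level.Low m L → Level l (Hmac k m) L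
  | Level_SEnc {l l' : level} {k p : term} {L : log} :
      canSEnc k p L → Level l' p L → Level l (SEnc k p) L
  | Level_SEnc_Low {l : level} {k p : term} {L : log} :
      Level level.Low k L → Level level.Low p L → Level l (SEnc k p) L

def log_leq (L L' : log) : Prop := ∀ x, Logged x L → Logged x L'

def Good (L : log) : Prop :=
  (∀ t u, Logged (event.New t u) L → ∃ bs, t = Literal bs) ∧
  (∀ t u1 u2, Logged (event.New t u1) L → Logged (event.New t u2) L → u1 = u2)

theorem WeakSecrecyKeyAB : ∀ (a b k : term) (L : log),
    Good L → KeyAB a b k L → Level level.Low k L →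
    Logged (event.Bad a) L ∨ Logged (event.Bad b) L := by
  intro a b k L hG hK hL
  obtain ⟨bs, rfl⟩ := hG.1 k _ hK
  cases hL with
  | Level_AttackerGuess h => cases hG.2 _ _ _ hK h
  | Level_Nonce nu h _ => cases hG.2 _ _ _ hK h
  | Level_SEncKey su h _ => cases hG.2 _ _ _ hK h
  | Level_HMacKey hu h hc =>
    cases hG.2 _ _ _ hK h
    obtain ⟨a', b', hK', hcomp⟩ := hc rfl
    cases hG.2 _ _ _ hK hK'
    exact hcomp
end

section
/- HMAC inversion: for all hmac key usages hu, terms m and k, and logs L, if L is Good, Logged (New k (HmacKey hu)) L, and Level High (Hmac k m) L, then canHmac k m L or hmacComp k L. -/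
open term

theorem Hmac_Inversion : ∀ (hu : hmacKeyUsage) (m k : term) (L : log),
    Good L → Logged (event.New k (usage.HmacKey hu)) L →
    Level level.High (term.Hmac k m) L →
    canHmac k m L ∨ hmacComp k L := by
  intro hu m k L hG hL hLev
  cases hLev with
  | Level_Hmac h _ => exact Or.inl h
  | Level_Hmac_Low hk _ =>
    right
    obtain ⟨bs, rfl⟩ := hG.1 k _ hL
    cases hk with
    | Level_AttackerGuess h => cases hG.2 _ _ _ hL h
    | Level_Nonce nu h hc => cases hG.2 _ _ _ hL h
    | Level_HMacKey hu' h hc => exact hc rfl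
    | Level_SEncKey su h hc => cases hG.2 _ _ _ hL h
end

section
/- Request authentication: for all terms a, b, req, k and logs L, if L is Good, KeyAB a b k L, and Level Low (Hmac k (Pair tagRequest req)) L, then Logged (Request a b req) L, or Logged (Bad a) L, or Logged (Bad b) L. -/
open term

theorem AuthenticationRequest : ∀ (a b req k : term) (L : log),
    Good L → KeyAB a b k L →
    Level level.Low (term.Hmac k (term.Pair tagRequest req)) L →
    Logged (event.Request a b req) L ∨
    Logged (event.Bad a) L ∨ Logged (event.Bad b) L := by
  intro a b req k L hG hK hL
  cases hL with
  | Level_Hmac hcan _ =>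
    obtain ⟨a', b', hK', hP⟩ := hcan
    have := hG.2 _ _ _ hK hK'
    simp only [usage.HmacKey.injEq, hmacKeyUsage.U_KeyAB.injEq] at this
    obtain ⟨rfl, rfl⟩ := this
    cases hP with
    | inl h =>
      obtain ⟨r, hr, hlog⟩ := h
      cases hr
      exact Or.inl hlog
    | inr h =>
      obtain ⟨r, s, hr, _⟩ := h
      simp [Responded, tagRequest, tagResponse] at hr
  | Level_Hmac_Low hk _ =>
    obtain ⟨bs, rfl⟩ := hG.1 _ _ hK
    cases hk with
    | Level_AttackerGuess hlog =>
      have := hG.2 _ _ _ hK hlog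
      simp at this
    | Level_Nonce nu hlog _ =>
      have := hG.2 _ _ _ hK hlog
      simp at this
    | Level_SEncKey su hlog _ =>
      have := hG.2 _ _ _ hK hlog
      simp at this
    | Level_HMacKey hu hlog hc =>
      obtain ⟨a', b', hK', hc'⟩ := hc rfl
      have := hG.2 _ _ _ hK hK'
      simp only [usage.HmacKey.injEq, hmacKeyUsage.U_KeyAB.injEq] at this
      obtain ⟨rfl, rfl⟩ := this
      exact Or.inr hc'
end

section
/- Response authentication: for all terms a, b, req, resp, k and logs L, if L is Good, KeyAB a b k L, and Level Low (Hmac k (Pair tagResponse (Pair req resp))) L, then Logged (Response a b req resp) L, or Logged (Bad a) L, or Logged (Bad b) L. -/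
open term

theorem AuthenticationResponse : ∀ (a b req resp k : term) (L : log),
    Good L → KeyAB a b k L →
    Level level.Low (term.Hmac k (term.Pair tagResponse (term.Pair req resp))) L →
    Logged (event.Response a b req resp) L ∨
    Logged (event.Bad a) L ∨ Logged (event.Bad b) L := by
  intro a b req resp k L hG hK hL
  obtain ⟨hG1, hG2⟩ := hG
  cases hL with
  | Level_Hmac hcan _ =>
      obtain ⟨a', b', hK', hP⟩ := hcan
      obtain ⟨bs, rfl⟩ := hG1 _ _ hK
      have := hG2 _ _ _ hK hK'
      injection this with h; injection h with h1 h2; subst h1; subst h2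
      cases hP with
      | inl h =>
          obtain ⟨req', hreq, _⟩ := h
          simp [Requested, tagRequest, tagResponse] at hreq
      | inr h =>
          obtain ⟨req', resp', hre, hlog⟩ := h
          unfold Responded at hre
          injection hre with h1 h2
          injection h2 with h3 h4
          subst h3; subst h4
          exact Or.inl hlog
  | Level_Hmac_Low hk _ =>
      obtain ⟨bs, rfl⟩ := hG1 _ _ hK
      cases hk with
      | Level_AttackerGuess h =>
          have := hG2 _ _ _ hK h; simp at this
      | Level_Nonce nu h _ =>
          have := hG2 _ _ _ hK h; simp at this
      | Level_SEncKey su h _ =>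
          have := hG2 _ _ _ hK h; simp at this
      | Level_HMacKey hu h hcomp =>
          obtain ⟨a', b', hK', hC⟩ := hcomp rfl
          have := hG2 _ _ _ hK hK'
          injection this with h'; injection h' with h1 h2
          subst h1; subst h2
          exact Or.inr hC
end

section
/- HMAC at Low level with an honest key implies the payload is Low: for all terms k, m and logs L, if L is Good, there exists an hmac key usage hu with Logged (New k (HmacKey hu)) L, Level Low (Hmac k m) L, and NOT hmacComp k L, then Level Low m L and canHmac k m L. -/
open term

theorem Hmac_Low_Honest : ∀ (k m : term) (L : log),
    Good L → (∃ hu, Logged (event.New k (usage.HmacKey hu)) L) →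
    Level level.Low (term.Hmac k m) L → ¬ hmacComp k L →
    Level level.Low m L ∧ canHmac k m L := by
  intro k m L hG ⟨hu, hLog⟩ hLvl hComp
  cases hLvl with
  | Level_Hmac hc hm => exact ⟨hm, hc⟩
  | Level_Hmac_Low hk hm =>
    exfalso
    obtain ⟨bs, rfl⟩ := hG.1 _ _ hLog
    cases hk with
    | Level_AttackerGuess h =>
      exact absurd (hG.2 _ _ _ h hLog) (by simp)
    | Level_Nonce nu h hlow =>
      exact absurd (hG.2 _ _ _ h hLog) (by simp)
    | Level_HMacKey hu' h hlow =>
      exact hComp (hlow rfl)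
    | Level_SEncKey su h hlow =>
      exact absurd (hG.2 _ _ _ h hLog) (by simp)
end
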